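/- Let I be a compact interval and f : I → I a continuous surjective map. For every open set U containing A(f) (the union of the α-limit sets of all points of I), there exists a natural number M such that for every point x ∈ I and every backward orbit branch (x_n)_{n≥0} of x, at most M terms of the sequence (x_n) lie outside U. -/

import Mathlib

open Filter Topology

/-- `g` is a backward orbit branch for `f`: `f (g (n+1)) = g n` for all `n`. -/
def IsBackwardBranch {X : Type*} (f : X → X) (g : ℕ → X) : Prop :=
  ∀ n : ℕ, f (g (n + 1)) = g n

/-- `g` is a preimage sequence of `x` for `f`: `f^[n] (g n) = x` for all `n`. -/
def IsPreimageSeq {X : Type*} (f : X → X) (x : X) (g : ℕ → X) : Prop :=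
  ∀ n : ℕ, f^[n] (g n) = x

/-- The set of limit points of a sequence `g`. -/
def limitPts {X : Type*} [TopologicalSpace X] (g : ℕ → X) : Set X :=
  {y | ∃ φ : ℕ → ℕ, StrictMono φ ∧ Filter.Tendsto (fun i => g (φ i)) Filter.atTop (nhds y)}

/-- The ω-limit set of a point `x`. -/
def omegaSet {X : Type*} [TopologicalSpace X] (f : X → X) (x : X) : Set X :=
  limitPts fun n => f^[n] x

/-- The α-limit set of a point `x`: limit points of preimage sequences of `x`. -/
def alphaSet {X : Type*} [TopologicalSpace X] (f : X → X) (x : X) : Set X :=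
  {y | ∃ g : ℕ → X, IsPreimageSeq f x g ∧ y ∈ limitPts g}

/-- The special α-limit set of a point `x`: limit points of backward orbit branches of `x`. -/
def sAlphaSet {X : Type*} [TopologicalSpace X] (f : X → X) (x : X) : Set X :=
  {y | ∃ g : ℕ → X, g 0 = x ∧ IsBackwardBranch f g ∧ y ∈ limitPts g}

/-- `A(f)`: the union of the α-limit sets of all points. -/
def bigA {X : Type*} [TopologicalSpace X] (f : X → X) : Set X := ⋃ x, alphaSet f x

/-- `SA(f)`: the union of the special α-limit sets of all points. -/
def bigSA {X : Type*} [TopologicalSpace X] (f : X → X) : Set X := ⋃ x, sAlphaSet f x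

/-- `ω(f)`: the union of the ω-limit sets of all points. -/
def omegaUnion {X : Type*} [TopologicalSpace X] (f : X → X) : Set X := ⋃ x, omegaSet f x

/-- The set of recurrent points of `f`. -/
def recPts {X : Type*} [TopologicalSpace X] (f : X → X) : Set X :=
  {x | ∀ U ∈ nhds x, ∃ n : ℕ, 1 ≤ n ∧ f^[n] x ∈ U}

/-- The set of non-wandering points of `f`. -/
def nwPts {X : Type*} [TopologicalSpace X] (f : X → X) : Set X :=
  {x | ∀ U ∈ nhds x, ∃ n : ℕ, 1 ≤ n ∧ (f^[n] '' U ∩ U).Nonempty}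

/-- The set of periodic points of `f`. -/
def perPts {X : Type*} (f : X → X) : Set X :=
  {p | ∃ k : ℕ, 1 ≤ k ∧ f^[k] p = p}

lemma isBackwardBranch_iterate {X : Type*} {f : X → X} {g : ℕ → X}
    (hg : IsBackwardBranch f g) : ∀ n m : ℕ, f^[m] (g (n + m)) = g n := by
  intro n m
  induction m with
  | zero => rfl
  | succ m ih =>
      rw [Function.iterate_succ_apply, Nat.add_succ, hg (n + m), ih]

lemma exists_strictMono_into {T : Set ℕ} (hT : T.Infinite) :
    ∃ ψ : ℕ → ℕ, StrictMono ψ ∧ ∀ r, ψ r ∈ T := by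
  have hgt : ∀ m : ℕ, ∃ k, k ∈ T ∧ m < k := by
    intro m
    by_contra h
    push_neg at h
    exact hT ((Set.finite_Iic m).subset (fun k hk => Set.mem_Iic.mpr (h k hk)))
  choose nxt hnT hngt using hgt
  refine ⟨fun r => Nat.rec (nxt 0) (fun _ ih => nxt ih) r,
    strictMono_nat_of_lt_succ (fun r => ?_), fun r => ?_⟩
  · exact hngt _
  · cases r with
    | zero => exact hnT 0
    | succ r => exact hnT _

lemma mem_bigA_of_data {X : Type*} [TopologicalSpace X] (f : X → X)
    (hsurj : Function.Surjective f) (y v : X) (d : ℕ → ℕ) (w : ℕ → X)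
    (hd : StrictMono d) (hw : ∀ r, f^[d r] (w r) = v)
    (hconv : Filter.Tendsto w Filter.atTop (nhds y)) : y ∈ bigA f := by
  classical
  have hfill : ∀ n : ℕ, ∃ z, f^[n] z = v := fun n => hsurj.iterate n v
  set g : ℕ → X := fun n => if h : ∃ r, d r = n then w h.choose else (hfill n).choose with hgdef
  have hpre : IsPreimageSeq f v g := by
    intro n
    by_cases h : ∃ r, d r = n
    · simp only [g, dif_pos h]
      have := hw h.choose
      rw [h.choose_spec] at this
      exact this
    · simp only [g, dif_neg h]
      exact (hfill n).choose_spec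
  have hgd : ∀ r, g (d r) = w r := by
    intro r
    have h : ∃ r', d r' = d r := ⟨r, rfl⟩
    simp only [g, dif_pos h]
    congr 1
    exact hd.injective h.choose_spec
  refine Set.mem_iUnion.mpr ⟨v, g, hpre, d, hd, ?_⟩
  have : (fun i => g (d i)) = w := funext hgd
  rw [this]
  exact hconv

lemma nwPts_subset_bigA {a b : ℝ} (hab : a ≤ b) (f : Set.Icc a b → Set.Icc a b)
    (hf : Continuous f) (hsurj : Function.Surjective f) :
    nwPts f ⊆ bigA f := by
  classical
  intro y hy
  by_cases hper : ∃ p, 1 ≤ p ∧ f^[p] y = y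
  · obtain ⟨p, hp1, hpy⟩ := hper
    refine mem_bigA_of_data f hsurj y y (fun r => p * r) (fun _ => y) ?_ ?_ tendsto_const_nhds
    · intro r r' hrr'
      exact mul_lt_mul_of_pos_left hrr' (by omega)
    · intro r
      rw [Function.iterate_mul]
      exact Function.iterate_fixed hpy r
  · push_neg at hper
    -- Step 1: deep nonwandering returns
    have nwdeep : ∀ δ : ℝ, 0 < δ → ∀ N : ℕ,
        ∃ n w, N < n ∧ dist w y < δ ∧ dist (f^[n] w) y < δ := by
      intro δ hδ N
      have hcont : ∀ j : ℕ, ∃ γ : ℝ, 0 < γ ∧ (1 ≤ j → ∀ z,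
          dist z y < γ → dist (f^[j] z) (f^[j] y) < dist (f^[j] y) y / 2) := by
        intro j
        by_cases hj : 1 ≤ j
        · have hdj : 0 < dist (f^[j] y) y := dist_pos.mpr (hper j hj)
          obtain ⟨γ, hγ, hγ2⟩ := Metric.continuousAt_iff.mp
            ((hf.iterate j).continuousAt) (dist (f^[j] y) y / 2) (by linarith)
          exact ⟨γ, hγ, fun _ z hz => hγ2 hz⟩
        · exact ⟨1, one_pos, fun h => absurd h hj⟩
      choose Γ hΓpos hΓ using hcont
      set v : ℕ → ℝ := fun j => if 1 ≤ j then min (Γ j) (dist (f^[j] y) y / 2) else δ with hv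
      have hvpos : ∀ j ∈ Finset.range (N+1), 0 < v j := by
        intro j _
        by_cases hj : 1 ≤ j
        · simp only [v, if_pos hj]
          exact lt_min (hΓpos j) (by
            have : 0 < dist (f^[j] y) y := dist_pos.mpr (hper j hj)
            linarith)
        · simp only [v, if_neg hj]; exact hδ
      set γ := (Finset.range (N+1)).inf' ⟨0, Finset.mem_range.mpr (by omega)⟩ v with hγdef
      have hγpos : 0 < γ := (Finset.lt_inf'_iff _).mpr hvpos
      have hγδ : γ ≤ δ := by
        have h0 : γ ≤ v 0 := Finset.inf'_le _ (Finset.mem_range.mpr (by omega))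
        simpa [v] using h0
      obtain ⟨n, hn1, hne⟩ := hy (Metric.ball y γ) (Metric.ball_mem_nhds y hγpos)
      obtain ⟨q, ⟨z, hzB, rfl⟩, hqB⟩ := hne
      refine ⟨n, z, ?_, lt_of_lt_of_le (Metric.mem_ball.mp hzB) hγδ,
        lt_of_lt_of_le (Metric.mem_ball.mp hqB) hγδ⟩
      by_contra hle
      push_neg at hle
      have hnr : n ∈ Finset.range (N+1) := Finset.mem_range.mpr (by omega)
      have hγv : γ ≤ v n := Finset.inf'_le _ hnr
      have hvn : v n = min (Γ n) (dist (f^[n] y) y / 2) := if_pos hn1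
      have h1 : dist z y < Γ n :=
        lt_of_lt_of_le (Metric.mem_ball.mp hzB) (hγv.trans (hvn ▸ min_le_left _ _))
      have h2 := hΓ n hn1 z h1
      have h3 : dist (f^[n] z) y < dist (f^[n] y) y / 2 :=
        lt_of_lt_of_le (Metric.mem_ball.mp hqB) (hγv.trans (hvn ▸ min_le_right _ _))
      have h4 := dist_triangle (f^[n] y) (f^[n] z) y
      have h5 : dist (f^[n] y) (f^[n] z) = dist (f^[n] z) (f^[n] y) := dist_comm _ _
      linarith
    -- Step 2: sequences
    have nwdeep' : ∀ (k N : ℕ), ∃ n w, N < n ∧ dist w y < 1/(k+1) ∧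
        dist (f^[n] w) y < 1/(k+1) := fun k N => nwdeep (1/(k+1)) (by positivity) N
    choose nf wf hh1 hh2 hh3 using nwdeep'
    set D : ℕ → ℕ × (Set.Icc a b) := fun k =>
      Nat.rec (⟨nf 0 0, wf 0 0⟩) (fun k ih => ⟨nf (k+1) ih.1, wf (k+1) ih.1⟩) k with hD
    set nk : ℕ → ℕ := fun k => (D k).1 with hnk
    set wk : ℕ → (Set.Icc a b) := fun k => (D k).2 with hwk
    have hD0 : D 0 = ⟨nf 0 0, wf 0 0⟩ := rfl
    have hDsucc : ∀ k, D (k+1) = ⟨nf (k+1) (nk k), wf (k+1) (nk k)⟩ := fun k => rfl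
    have hmono : StrictMono nk := by
      apply strictMono_nat_of_lt_succ
      intro k
      have : nk (k+1) = nf (k+1) (nk k) := rfl
      rw [this]
      exact hh1 (k+1) (nk k)
    have hnk1 : ∀ k, 1 ≤ nk k := by
      intro k
      have h0 : 1 ≤ nk 0 := hh1 0 0
      exact le_trans h0 (hmono.monotone (Nat.zero_le k))
    have hwd : ∀ k, dist (wk k) y < 1/(k+1) := by
      intro k
      cases k with
      | zero => exact hh2 0 0
      | succ k =>
          exact hh2 (k+1) (nk k)
    have hud : ∀ k, dist (f^[nk k] (wk k)) y < 1/(k+1) := by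
      intro k
      cases k with
      | zero => exact hh3 0 0
      | succ k =>
          exact hh3 (k+1) (nk k)
    -- Step 3: real map setup
    set Y : ℝ := (y : ℝ) with hY
    have hproj_mem : ∀ x : ℝ, max a (min x b) ∈ Set.Icc a b :=
      fun x => ⟨le_max_left _ _, max_le hab (min_le_right _ _)⟩
    set proj : ℝ → (Set.Icc a b) := fun x => ⟨max a (min x b), hproj_mem x⟩ with hprojdef
    have hprojcont : Continuous proj :=
      Continuous.subtype_mk (continuous_const.max (continuous_id.min continuous_const)) _
    set F : ℝ → ℝ := fun x => ((f (proj x) : Set.Icc a b) : ℝ) with hFdef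
    have hFcont : Continuous F := continuous_subtype_val.comp (hf.comp hprojcont)
    have hproj : ∀ z : Set.Icc a b, proj (z : ℝ) = z := by
      intro z
      apply Subtype.ext
      show max a (min (z:ℝ) b) = (z:ℝ)
      rw [min_eq_left z.2.2, max_eq_right z.2.1]
    have hagree : ∀ (m : ℕ) (z : Set.Icc a b), F^[m] (z : ℝ) = ((f^[m] z : Set.Icc a b) : ℝ) := by
      intro m
      induction m with
      | zero => intro z; rfl
      | succ m ih =>
          intro z
          rw [Function.iterate_succ_apply, Function.iterate_succ_apply]
          have hz : F (z : ℝ) = ((f z : Set.Icc a b) : ℝ) := by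
            show ((f (proj (z:ℝ)) : Set.Icc a b) : ℝ) = _
            rw [hproj z]
          rw [hz, ih (f z)]
    have hFrange : ∀ x : ℝ, F x ∈ Set.Icc a b := fun x => (f (proj x)).2
    set δk : ℕ → ℝ := fun k => 1/(k+1) with hδk
    have hδkpos : ∀ k, 0 < δk k := fun k => by positivity
    set DomR : ℕ → Set ℝ := fun k => Set.Icc (Y - δk k) (Y + δk k) ∩ Set.Icc a b with hDomR
    set JsetR : ℕ → Set ℝ := fun k => F^[nk k] '' DomR k with hJsetR
    have hDomC : ∀ k, IsCompact (DomR k) := fun k => isCompact_Icc.inter_right isClosed_Icc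
    have hDomConn : ∀ k, IsPreconnected (DomR k) := by
      intro k
      rw [show DomR k = Set.Icc (max (Y - δk k) a) (min (Y + δk k) b) by
        rw [hDomR]; exact Set.Icc_inter_Icc]
      exact isPreconnected_Icc
    have hJC : ∀ k, IsCompact (JsetR k) := fun k => (hDomC k).image (hFcont.iterate _)
    have hJconn : ∀ k, IsPreconnected (JsetR k) :=
      fun k => (hDomConn k).image _ ((hFcont.iterate _).continuousOn)
    have hJord : ∀ k, (JsetR k).OrdConnected := fun k => (hJconn k).ordConnected
    have hJsub : ∀ k, JsetR k ⊆ Set.Icc a b := by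
      intro k p hp
      obtain ⟨x, hx, hFx⟩ := hp
      obtain ⟨m, hm⟩ : ∃ m, nk k = m + 1 := ⟨nk k - 1, by have := hnk1 k; omega⟩
      rw [hm, Function.iterate_succ_apply'] at hFx
      exact hFx ▸ hFrange _
    have hwmem : ∀ k, ((wk k : Set.Icc a b) : ℝ) ∈ DomR k := by
      intro k
      have hd := hwd k
      rw [Subtype.dist_eq, Real.dist_eq] at hd
      have habs := abs_lt.mp hd
      exact ⟨⟨by simp only [hδk]; linarith [habs.1], by simp only [hδk]; linarith [habs.2]⟩,
        (wk k).2⟩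
    have humem : ∀ k, ((f^[nk k] (wk k) : Set.Icc a b) : ℝ) ∈ JsetR k :=
      fun k => ⟨((wk k : Set.Icc a b) : ℝ), hwmem k, hagree _ _⟩
    have huclose : ∀ k, |((f^[nk k] (wk k) : Set.Icc a b) : ℝ) - Y| < δk k := by
      intro k
      have hd := hud k
      rw [Subtype.dist_eq, Real.dist_eq] at hd
      exact hd
    have htrans : ∀ k (p : ℝ), p ∈ JsetR k → ∀ hp : p ∈ Set.Icc a b,
        ∃ w : Set.Icc a b, dist w y ≤ δk k ∧ f^[nk k] w = ⟨p, hp⟩ := by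
      intro k p hpJ hp
      obtain ⟨x, hx, hFx⟩ := hpJ
      refine ⟨⟨x, hx.2⟩, ?_, ?_⟩
      · rw [Subtype.dist_eq, Real.dist_eq]
        have h1 := hx.1
        rw [Set.mem_Icc] at h1
        exact abs_le.mpr ⟨by linarith [h1.1], by linarith [h1.2]⟩
      · apply Subtype.ext
        show ((f^[nk k] ⟨x, hx.2⟩ : Set.Icc a b) : ℝ) = p
        rw [← hagree]
        exact hFx
    -- small helper: eventually δk k ≤ η
    have hδev : ∀ η : ℝ, 0 < η → {k : ℕ | η < δk k}.Finite := by
      intro η hη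
      obtain ⟨K, hK⟩ := exists_nat_ge (1/η)
      apply Set.Finite.subset (Set.finite_Iic K)
      intro k hk
      simp only [Set.mem_setOf_eq] at hk
      rw [Set.mem_Iic]
      by_contra hkK
      push_neg at hkK
      have h1 : (K : ℝ) ≤ (k : ℝ) := Nat.cast_le.mpr (le_of_lt hkK)
      have h2 : 1/η ≤ (k:ℝ) := le_trans hK h1
      have h3 : δk k ≤ η := by
        simp only [hδk]
        rw [div_le_iff₀ (by positivity)]
        have : 1/η * η ≤ (k:ℝ) * η := by
          apply mul_le_mul_of_nonneg_right h2 (le_of_lt hη)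
        rw [one_div_mul_cancel (ne_of_gt hη)] at this
        nlinarith [hη]
      exact absurd hk (not_lt.mpr h3)
    have hδkle : ∀ r k : ℕ, r ≤ k → δk k ≤ 1/(r+1) := by
      intro r k hrk
      simp only [hδk]
      apply one_div_le_one_div_of_le (by positivity)
      have : (r:ℝ) ≤ (k:ℝ) := Nat.cast_le.mpr hrk
      linarith
    by_cases hcap : ∃ η : ℝ, 0 < η ∧ {k | ∃ p ∈ JsetR k, η ≤ |p - Y|}.Infinite
    · -- capture case
      obtain ⟨η, hη, hinf⟩ := hcap
      have hsplit : {k | ∃ p ∈ JsetR k, Y + η ≤ p}.Infinite ∨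
          {k | ∃ p ∈ JsetR k, p ≤ Y - η}.Infinite := by
        by_contra hc
        push_neg at hc
        obtain ⟨hc1, hc2⟩ := hc
        apply hinf
        apply Set.Finite.subset (hc1.union hc2)
        intro k hk
        obtain ⟨p, hpJ, hpabs⟩ := hk
        rcases le_abs.mp hpabs with h | h
        · exact Or.inl ⟨p, hpJ, by linarith⟩
        · exact Or.inr ⟨p, hpJ, by linarith⟩
      -- unified handling of both sides via a sign parameter is messy; do both cases
      rcases hsplit with hside | hside
      · -- right side: v = Y + η
        set T' := {k | ∃ p ∈ JsetR k, Y + η ≤ p} \ {k | η < δk k} with hT'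
        have hT'inf : T'.Infinite := hside.diff (hδev η hη)
        obtain ⟨ψ, hψmono, hψT⟩ := exists_strictMono_into hT'inf
        have hvJ : ∀ r, (Y + η) ∈ JsetR (ψ r) := by
          intro r
          obtain ⟨⟨p, hpJ, hpge⟩, hδη⟩ := hψT r
          simp only [Set.mem_setOf_eq, not_lt] at hδη
          have hu := humem (ψ r)
          have huc := huclose (ψ r)
          have huv : ((f^[nk (ψ r)] (wk (ψ r)) : Set.Icc a b) : ℝ) ≤ Y + η := by
            have := abs_lt.mp huc
            linarith [this.2]
          exact (hJord (ψ r)).out hu hpJ ⟨huv, hpge⟩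
        have hvIcc : (Y + η) ∈ Set.Icc a b := hJsub (ψ 0) (hvJ 0)
        have hdata : ∀ r, ∃ w : Set.Icc a b, dist w y ≤ δk (ψ r) ∧
            f^[nk (ψ r)] w = ⟨Y + η, hvIcc⟩ := fun r => htrans (ψ r) _ (hvJ r) hvIcc
        choose w hwdist hwv using hdata
        refine mem_bigA_of_data f hsurj y ⟨Y + η, hvIcc⟩ (fun r => nk (ψ r)) w
          (hmono.comp hψmono) hwv ?_
        rw [tendsto_iff_dist_tendsto_zero]
        apply squeeze_zero (fun r => dist_nonneg) (fun r => ?_)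
          tendsto_one_div_add_atTop_nhds_zero_nat
        exact le_trans (hwdist r) (hδkle r (ψ r) (hψmono.le_apply))
      · -- left side: v = Y - η
        set T' := {k | ∃ p ∈ JsetR k, p ≤ Y - η} \ {k | η < δk k} with hT'
        have hT'inf : T'.Infinite := hside.diff (hδev η hη)
        obtain ⟨ψ, hψmono, hψT⟩ := exists_strictMono_into hT'inf
        have hvJ : ∀ r, (Y - η) ∈ JsetR (ψ r) := by
          intro r
          obtain ⟨⟨p, hpJ, hple⟩, hδη⟩ := hψT r
          simp only [Set.mem_setOf_eq, not_lt] at hδη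
          have hu := humem (ψ r)
          have huc := huclose (ψ r)
          have huv : Y - η ≤ ((f^[nk (ψ r)] (wk (ψ r)) : Set.Icc a b) : ℝ) := by
            have := abs_lt.mp huc
            linarith [this.1]
          exact (hJord (ψ r)).out hpJ hu ⟨hple, huv⟩
        have hvIcc : (Y - η) ∈ Set.Icc a b := hJsub (ψ 0) (hvJ 0)
        have hdata : ∀ r, ∃ w : Set.Icc a b, dist w y ≤ δk (ψ r) ∧
            f^[nk (ψ r)] w = ⟨Y - η, hvIcc⟩ := fun r => htrans (ψ r) _ (hvJ r) hvIcc
        choose w hwdist hwv using hdata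
        refine mem_bigA_of_data f hsurj y ⟨Y - η, hvIcc⟩ (fun r => nk (ψ r)) w
          (hmono.comp hψmono) hwv ?_
        rw [tendsto_iff_dist_tendsto_zero]
        apply squeeze_zero (fun r => dist_nonneg) (fun r => ?_)
          tendsto_one_div_add_atTop_nhds_zero_nat
        exact le_trans (hwdist r) (hδkle r (ψ r) (hψmono.le_apply))
    · -- nesting case
      push_neg at hcap
      have hgood : ∀ η : ℝ, 0 < η → {k | ∃ p ∈ JsetR k, η ≤ |p - Y|}.Finite := by
        intro η hη
        exact hcap η hη
      have hstep : ∀ m : ℕ, ∃ k, m < k ∧ ∀ p ∈ JsetR k, |p - Y| < δk m := by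
        intro m
        have hfin := (hgood (δk m) (hδkpos m)).union (Set.finite_Iic m)
        obtain ⟨k, hk⟩ := hfin.infinite_compl.nonempty
        rw [Set.mem_compl_iff, Set.mem_union] at hk
        push_neg at hk
        obtain ⟨hk1, hk2⟩ := hk
        rw [Set.mem_Iic, not_le] at hk2
        refine ⟨k, hk2, ?_⟩
        intro p hp
        by_contra hge
        push_neg at hge
        exact hk1 ⟨p, hp, hge⟩
      choose κnext hκgt hκprop using hstep
      set κ : ℕ → ℕ := fun r => Nat.rec 0 (fun _ ih => κnext ih) r with hκ
      have hκsucc : ∀ r, κ (r+1) = κnext (κ r) := fun r => rfl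
      have hκmono : StrictMono κ :=
        strictMono_nat_of_lt_succ (fun r => hκgt (κ r))
      have hchain : ∀ r, JsetR (κ (r+1)) ⊆ DomR (κ r) := by
        intro r p hp
        have h := hκprop (κ r) p hp
        have habs := abs_lt.mp h
        exact ⟨⟨by linarith [habs.1], by linarith [habs.2]⟩, hJsub _ hp⟩
      set S : ℕ → ℕ := fun r => Nat.rec 0 (fun r ih => ih + nk (κ r)) r with hS
      have hSsucc : ∀ r, S (r+1) = S r + nk (κ r) := fun r => rfl
      set P : ℕ → Set ℝ := fun r => F^[S r] '' JsetR (κ r) with hP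
      have hkey : ∀ r, P r = F^[S (r+1)] '' DomR (κ r) := by
        intro r
        show F^[S r] '' (F^[nk (κ r)] '' DomR (κ r)) = F^[S (r+1)] '' DomR (κ r)
        rw [← Set.image_comp, hSsucc r, ← Function.iterate_add]
      have hnested : ∀ r, P (r+1) ⊆ P r := by
        intro r
        calc P (r+1) = F^[S (r+1)] '' JsetR (κ (r+1)) := rfl
          _ ⊆ F^[S (r+1)] '' DomR (κ r) := Set.image_mono (hchain r)
          _ = P r := (hkey r).symm
      have hPne : ∀ r, (P r).Nonempty := fun r => ⟨_, Set.mem_image_of_mem _ (humem (κ r))⟩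
      have hPc : ∀ r, IsCompact (P r) := fun r => (hJC (κ r)).image (hFcont.iterate _)
      obtain ⟨v, hv⟩ := IsCompact.nonempty_iInter_of_sequence_nonempty_isCompact_isClosed
        P hnested hPne (hPc 0) (fun r => (hPc r).isClosed)
      have hvP : ∀ r, v ∈ P r := fun r => Set.mem_iInter.mp hv r
      have hvIcc : v ∈ Set.Icc a b := by
        have h0 := hvP 0
        rw [hP] at h0
        simp only [show S 0 = 0 from rfl, Function.iterate_zero, Set.image_id] at h0
        exact hJsub (κ 0) h0
      have hdata : ∀ r, ∃ x, x ∈ DomR (κ r) ∧ F^[S (r+1)] x = v := by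
        intro r
        have := hvP r
        rw [hkey r] at this
        obtain ⟨x, hx, hFx⟩ := this
        exact ⟨x, hx, hFx⟩
      choose xr hxr hFxr using hdata
      set w : ℕ → (Set.Icc a b) := fun r => ⟨xr r, (hxr r).2⟩ with hw
      have hfw : ∀ r, f^[S (r+1)] (w r) = ⟨v, hvIcc⟩ := by
        intro r
        apply Subtype.ext
        show ((f^[S (r+1)] (w r) : Set.Icc a b) : ℝ) = v
        rw [← hagree]
        exact hFxr r
      have hdmono : StrictMono (fun r => S (r+1)) := by
        apply strictMono_nat_of_lt_succ
        intro r
        have := hnk1 (κ (r+1))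
        rw [hSsucc (r+1)]
        omega
      refine mem_bigA_of_data f hsurj y ⟨v, hvIcc⟩ (fun r => S (r+1)) w hdmono hfw ?_
      rw [tendsto_iff_dist_tendsto_zero]
      apply squeeze_zero (fun r => dist_nonneg) (fun r => ?_)
        tendsto_one_div_add_atTop_nhds_zero_nat
      have hd1 : dist (w r) y ≤ δk (κ r) := by
        rw [Subtype.dist_eq, Real.dist_eq]
        obtain ⟨h1a, h1b⟩ := (hxr r).1
        exact abs_le.mpr ⟨by linarith, by linarith⟩
      exact le_trans hd1 (hδkle r (κ r) (hκmono.le_apply))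

theorem birkhoff_for_alpha {a b : ℝ} (hab : a ≤ b) (f : Set.Icc a b → Set.Icc a b)
    (hf : Continuous f) (hsurj : Function.Surjective f)
    (U : Set (Set.Icc a b)) (hU : IsOpen U) (hAU : bigA f ⊆ U) :
    ∃ M : ℕ, ∀ g : ℕ → Set.Icc a b, IsBackwardBranch f g →
      ∀ s : Finset ℕ, (∀ n ∈ s, g n ∉ U) → s.card ≤ M := by
  classical
  haveI : CompactSpace (Set.Icc a b) := isCompact_iff_compactSpace.mp isCompact_Icc
  set K : Set (Set.Icc a b) := Uᶜ with hK
  have hKc : IsCompact K := hU.isClosed_compl.isCompact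
  have hwand : ∀ y : Set.Icc a b, y ∈ K →
      ∃ V, V ∈ nhds y ∧ ∀ n, 1 ≤ n → (f^[n] '' V ∩ V) = ∅ := by
    intro y hyK
    have hynA : y ∉ bigA f := fun h => hyK (hAU h)
    have hynΩ : y ∉ nwPts f := fun h => hynA (nwPts_subset_bigA hab f hf hsurj h)
    simp only [nwPts, Set.mem_setOf_eq] at hynΩ
    push_neg at hynΩ
    obtain ⟨V, hV, hVprop⟩ := hynΩ
    exact ⟨V, hV, hVprop⟩
  choose! V hVnhds hVemp using hwand
  have hcover : K ⊆ ⋃ (i : K), interior (V (i : Set.Icc a b)) := by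
    intro x hx
    exact Set.mem_iUnion.mpr ⟨⟨x, hx⟩, mem_interior_iff_mem_nhds.mpr (hVnhds x hx)⟩
  obtain ⟨t, ht⟩ := hKc.elim_finite_subcover
    (fun i : K => interior (V (i : Set.Icc a b))) (fun _ => isOpen_interior) hcover
  refine ⟨t.card, ?_⟩
  intro g hg s hs
  rcases s.eq_empty_or_nonempty with rfl | ⟨n₀, hn₀⟩
  · simp
  haveI : Nonempty K := ⟨⟨g n₀, hs n₀ hn₀⟩⟩
  have hchoice : ∀ n ∈ s, ∃ i, i ∈ t ∧ g n ∈ interior (V (i : Set.Icc a b)) := by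
    intro n hn
    have hgK : g n ∈ K := hs n hn
    have := ht hgK
    rw [Set.mem_iUnion₂] at this
    obtain ⟨i, hit, hgi⟩ := this
    exact ⟨i, hit, hgi⟩
  choose! I hIt hIO using hchoice
  apply Finset.card_le_card_of_injOn I hIt
  intro n hn m hm hnm
  rw [Finset.mem_coe] at hn hm
  by_contra hne
  have key : ∀ n m, n ∈ s → m ∈ s → n < m → I n = I m → False := by
    intro n m hn hm hlt heq
    have h1 : g n ∈ V ((I n : K) : Set.Icc a b) := interior_subset (hIO n hn)
    have h2 : g m ∈ V ((I n : K) : Set.Icc a b) := by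
      rw [heq]
      exact interior_subset (hIO m hm)
    have h3 : f^[m - n] (g m) = g n := by
      have := isBackwardBranch_iterate hg n (m - n)
      rwa [show n + (m - n) = m by omega] at this
    have h4 : (f^[m - n] '' V ((I n : K) : Set.Icc a b) ∩ V ((I n : K) : Set.Icc a b)) = ∅ :=
      hVemp ((I n : K) : Set.Icc a b) (I n).2 (m - n) (by omega)
    have h5 : g n ∈ f^[m - n] '' V ((I n : K) : Set.Icc a b) ∩ V ((I n : K) : Set.Icc a b) :=
      ⟨⟨g m, h2, h3⟩, h1⟩
    rw [h4] at h5
    exact h5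
  rcases lt_or_gt_of_ne hne with h | h
  · exact key n m hn hm h hnm
  · exact key m n hm hn h hnm.symm
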